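/- Let μ be any probability measure on {−1,1}^n and let μ_t be defined recursively by μ_0 = μ, μ_t = μ_{t−1} ∘ μ_{t−1}, where (μ∘ν)(σ) := 2^{−n} Σ_{A⊆[n]} (μ_A ⊗ ν_{A^c})(σ). Then for every t ∈ ℕ, μ_t = N^{−n} Σ (μ_{A_1} ⊗ … ⊗ μ_{A_N}), where N = 2^t and the sum runs over all ordered partitions (A_1,…,A_N) of [n] into N (possibly empty) disjoint sets. -/

import Mathlib

open MeasureTheory
open scoped ENNReal

/-- The Boolean cube `{−1,1}^n`. -/
abbrev Cube (n : ℕ) := Fin n → ({-1, 1} : Set ℤ)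

/-- The recombination `μ_A ⊗ ν_{A^c}`: the law of the configuration which agrees with a
`μ`-sample on `A` and with an independent `ν`-sample on `A^c`. -/
noncomputable def recomb (n : ℕ) (A : Finset (Fin n)) (μ ν : Measure (Cube n)) :
    Measure (Cube n) :=
  Measure.map (fun p : Cube n × Cube n => fun i => if i ∈ A then p.1 i else p.2 i) (μ.prod ν)

/-- The collision product `μ∘ν = 2^{−n} Σ_{A⊆[n]} μ_A ⊗ ν_{A^c}`. -/
noncomputable def collision (n : ℕ) (μ ν : Measure (Cube n)) : Measure (Cube n) :=
  ((2 : ℝ≥0∞) ^ n)⁻¹ • ∑ A : Finset (Fin n), recomb n A μ ν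

/-- The discrete-time nonlinear recombination dynamics `μ_0 = μ`, `μ_t = μ_{t−1} ∘ μ_{t−1}`. -/
noncomputable def iterateRec (n : ℕ) (μ : Measure (Cube n)) : ℕ → Measure (Cube n)
  | 0 => μ
  | t + 1 => collision n (iterateRec n μ t) (iterateRec n μ t)

set_option linter.unusedSectionVars false

section LinAux
variable {X Y : Type*} [MeasurableSpace X] [MeasurableSpace Y]
  [Countable X] [Countable Y] [MeasurableSingletonClass X] [MeasurableSingletonClass Y]

lemma sfinite_finset_sum {ι : Type*} (s : Finset ι) (ν : ι → Measure Y)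
    [∀ i, SFinite (ν i)] : SFinite (∑ i ∈ s, ν i) := by
  classical
  induction s using Finset.cons_induction with
  | empty => simpa using inferInstanceAs (SFinite (0 : Measure Y))
  | cons a s ha ih => rw [Finset.sum_cons]; exact @inferInstance _ _

lemma sum_prod' {ι : Type*} (s : Finset ι) (μ : ι → Measure X) (ν : Measure Y) [SFinite ν] :
    (∑ i ∈ s, μ i).prod ν = ∑ i ∈ s, (μ i).prod ν := by
  ext u hu
  rw [Measure.prod_apply hu, lintegral_finset_sum_measure, Measure.finset_sum_apply]
  exact Finset.sum_congr rfl fun i _ => (Measure.prod_apply hu).symm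

lemma prod_sum' (μ : Measure X) {ι : Type*} (s : Finset ι) (ν : ι → Measure Y)
    [∀ i, SFinite (ν i)] :
    μ.prod (∑ i ∈ s, ν i) = ∑ i ∈ s, μ.prod (ν i) := by
  haveI := sfinite_finset_sum s ν
  ext u hu
  rw [Measure.prod_apply hu, Measure.finset_sum_apply]
  simp_rw [Measure.finset_sum_apply]
  rw [lintegral_finset_sum s (fun i _ => measurable_of_countable _)]
  exact Finset.sum_congr rfl fun i _ => (Measure.prod_apply hu).symm

lemma smul_prod' (c : ℝ≥0∞) (μ : Measure X) (ν : Measure Y) [SFinite ν] :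
    (c • μ).prod ν = c • μ.prod ν := by
  ext u hu
  rw [Measure.prod_apply hu, lintegral_smul_measure, Measure.smul_apply, smul_eq_mul,
    Measure.prod_apply hu, smul_eq_mul]

lemma prod_smul' (c : ℝ≥0∞) (μ : Measure X) (ν : Measure Y) [SFinite ν] :
    μ.prod (c • ν) = c • μ.prod ν := by
  ext u hu
  rw [Measure.prod_apply hu, Measure.smul_apply, smul_eq_mul, Measure.prod_apply hu,
    ← lintegral_const_mul c (measurable_of_countable _)]
  simp [Measure.smul_apply, mul_comm]

lemma map_finset_sum' {ι : Type*} {f : X → Y} (hf : Measurable f) (s : Finset ι)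
    (μ : ι → Measure X) :
    Measure.map f (∑ i ∈ s, μ i) = ∑ i ∈ s, Measure.map f (μ i) := by
  classical
  induction s using Finset.cons_induction with
  | empty => simp
  | cons a s ha ih => rw [Finset.sum_cons, Measure.map_add _ _ hf, ih, Finset.sum_cons]

end LinAux

noncomputable def sel {n : ℕ} (μ : Measure (Cube n)) {κ : Type} [Fintype κ] (W : Fin n → κ) :
    Measure (Cube n) :=
  Measure.map (fun p : κ → Cube n => fun i => p (W i) i) (Measure.pi fun _ => μ)

section SelAux
variable {n : ℕ} (μ : Measure (Cube n)) [IsProbabilityMeasure μ]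

instance sel_prob {κ : Type} [Fintype κ] (W : Fin n → κ) : IsProbabilityMeasure (sel μ W) :=
  Measure.isProbabilityMeasure_map (measurable_of_countable _).aemeasurable

lemma sel_reindex {κ κ' : Type} [Fintype κ] [Fintype κ'] (e : κ ≃ κ') (W : Fin n → κ) :
    sel μ (fun i => e (W i)) = sel μ W := by
  have h : Measure.map (⇑(MeasurableEquiv.piCongrLeft (fun _ : κ' => Cube n) e))
      (Measure.pi fun _ : κ => μ) = Measure.pi fun _ : κ' => μ :=
    (measurePreserving_piCongrLeft (fun _ : κ' => μ) e).map_eq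
  rw [sel, ← h, Measure.map_map (measurable_of_countable _) (measurable_of_countable _)]
  rw [sel]
  congr 1
  funext p
  funext i
  simp [MeasurableEquiv.piCongrLeft, Equiv.piCongrLeft_apply_apply]

lemma sum_sel_reindex {κ κ' : Type} [Fintype κ] [Fintype κ'] (e : κ ≃ κ') :
    (∑ W : Fin n → κ, sel μ W) = ∑ W' : Fin n → κ', sel μ W' := by
  refine Fintype.sum_equiv (Equiv.piCongrRight fun _ => e) _ _ fun W => ?_
  rw [← sel_reindex μ e W]
  rfl

end SelAux

section RecombSel
variable {n : ℕ} (μ : Measure (Cube n)) [IsProbabilityMeasure μ]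

lemma pi_prod_pi (κ : Type) [Fintype κ] :
    (Measure.pi fun _ : κ => μ).prod (Measure.pi fun _ : κ => μ)
      = Measure.map (fun q : (κ ⊕ κ) → Cube n => (fun j => q (.inl j), fun j => q (.inr j)))
          (Measure.pi fun _ : κ ⊕ κ => μ) := by
  have h := (measurePreserving_sumPiEquivProdPi (fun _ : κ ⊕ κ => μ)).map_eq
  rw [← h]
  rfl

lemma recomb_sel (A : Finset (Fin n)) {κ : Type} [Fintype κ] (U V : Fin n → κ) :
    recomb n A (sel μ U) (sel μ V)
      = sel μ (fun i => if i ∈ A then Sum.inl (U i) else Sum.inr (V i)) := by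
  rw [recomb, sel, sel, sel,
    Measure.map_prod_map _ _ (measurable_of_countable _) (measurable_of_countable _),
    pi_prod_pi μ κ,
    Measure.map_map (measurable_of_countable _) (measurable_of_countable _),
    Measure.map_map (measurable_of_countable _) (measurable_of_countable _)]
  congr 1
  funext q
  funext i
  by_cases h : i ∈ A <;> simp [h]

end RecombSel

section Counting
variable {n : ℕ} {κ : Type} [Fintype κ]

def combineEquiv (n : ℕ) (κ : Type) :
    (Finset (Fin n)) × (Fin n → κ) × (Fin n → κ) ≃ (Fin n → κ ⊕ κ) × (Fin n → κ) where
  toFun x := (fun i => if i ∈ x.1 then .inl (x.2.1 i) else .inr (x.2.2 i),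
              fun i => if i ∈ x.1 then x.2.2 i else x.2.1 i)
  invFun y := (Finset.univ.filter (fun i => (y.1 i).isLeft),
               fun i => match y.1 i with | .inl u => u | .inr _ => y.2 i,
               fun i => match y.1 i with | .inl _ => y.2 i | .inr v => v)
  left_inv := by
    rintro ⟨A, U, V⟩
    simp only [Prod.mk.injEq]
    refine ⟨?_, ?_, ?_⟩
    · ext i
      by_cases h : i ∈ A <;> simp [h]
    · funext i
      by_cases h : i ∈ A <;> simp [h]
    · funext i
      by_cases h : i ∈ A <;> simp [h]
  right_inv := by
    rintro ⟨W, X⟩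
    simp only [Prod.mk.injEq]
    constructor
    · funext i
      rcases h : W i with u | v <;> simp [h]
    · funext i
      rcases h : W i with u | v <;> simp [h]

lemma count_sum {M : Type*} [AddCommMonoid M] (f : (Fin n → κ ⊕ κ) → M) :
    (∑ A : Finset (Fin n), ∑ U : Fin n → κ, ∑ V : Fin n → κ,
        f (fun i => if i ∈ A then .inl (U i) else .inr (V i)))
      = (Fintype.card κ ^ n) • ∑ W : Fin n → κ ⊕ κ, f W := by
  classical
  have h1 : (∑ A : Finset (Fin n), ∑ U : Fin n → κ, ∑ V : Fin n → κ,
        f (fun i => if i ∈ A then .inl (U i) else .inr (V i)))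
      = ∑ x : (Finset (Fin n)) × (Fin n → κ) × (Fin n → κ), f ((combineEquiv n κ x).1) := by
    rw [Fintype.sum_prod_type]
    refine Finset.sum_congr rfl fun A _ => ?_
    rw [Fintype.sum_prod_type]
    rfl
  rw [h1, Fintype.sum_equiv (combineEquiv n κ) _ (fun y => f y.1) (fun x => rfl),
    Fintype.sum_prod_type]
  simp [Finset.sum_const, Finset.card_univ, Fintype.card_fun, Finset.smul_sum]
end Counting

section Step
variable {n : ℕ} (μ : Measure (Cube n)) [IsProbabilityMeasure μ]

lemma collision_step (κ : Type) [Fintype κ] (c : ℝ≥0∞) :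
    collision n (c • ∑ U : Fin n → κ, sel μ U) (c • ∑ U : Fin n → κ, sel μ U)
      = (((2 : ℝ≥0∞) ^ n)⁻¹ * c * c * ((Fintype.card κ : ℝ≥0∞)) ^ n) •
          ∑ W : Fin n → κ ⊕ κ, sel μ W := by
  classical
  set S := ∑ U : Fin n → κ, sel μ U with hS
  haveI : SFinite S := sfinite_finset_sum _ _
  have hprod : (c • S).prod (c • S)
      = (c * c) • ∑ U : Fin n → κ, ∑ V : Fin n → κ, (sel μ U).prod (sel μ V) := by
    rw [prod_smul', smul_prod', smul_smul, hS, sum_prod']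
    congr 1
    refine Finset.sum_congr rfl fun U _ => ?_
    rw [prod_sum']
  have hrec : ∀ A : Finset (Fin n), recomb n A (c • S) (c • S)
      = (c * c) • ∑ U : Fin n → κ, ∑ V : Fin n → κ,
          sel μ (fun i => if i ∈ A then Sum.inl (U i) else Sum.inr (V i)) := by
    intro A
    rw [recomb, hprod, Measure.map_smul]
    congr 1
    rw [map_finset_sum' (measurable_of_countable _)]
    refine Finset.sum_congr rfl fun U _ => ?_
    rw [map_finset_sum' (measurable_of_countable _)]
    refine Finset.sum_congr rfl fun V _ => ?_
    exact recomb_sel μ A U V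
  rw [collision]
  simp_rw [hrec]
  rw [← Finset.smul_sum, count_sum (fun W => sel μ W), smul_smul,
    ← Nat.cast_smul_eq_nsmul (R := ℝ≥0∞) (Fintype.card κ ^ n) (∑ W : Fin n → κ ⊕ κ, sel μ W), smul_smul]
  congr 1
  push_cast
  ring
end Step

/-- `μ_t = N^{−n} Σ μ_{A_1} ⊗ … ⊗ μ_{A_N}` with `N = 2^t`, the sum running over all ordered
partitions of `[n]` into `N` (possibly empty) blocks, encoded by labelings `U : [n] → [N]`. -/
theorem stmt_14 (n : ℕ) (μ : Measure (Cube n)) [IsProbabilityMeasure μ] (t : ℕ) :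
    iterateRec n μ t
      = (((2 : ℝ≥0∞) ^ t) ^ n)⁻¹ •
          ∑ U : Fin n → Fin (2 ^ t),
            Measure.map (fun p : Fin (2 ^ t) → Cube n => fun i => p (U i) i)
              (Measure.pi fun _ => μ) := by
  induction t with
  | zero =>
    haveI : Unique (Fin (2 ^ 0)) := inferInstanceAs (Unique (Fin 1))
    have hone : ∀ U : Fin n → Fin (2 ^ 0), sel μ U = μ := by
      intro U
      have hf : (fun p : (Fin (2 ^ 0) → Cube n) => fun i => p (U i) i)
          = ⇑(MeasurableEquiv.piUnique (fun _ : Fin (2 ^ 0) => Cube n)) := by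
        funext p
        rw [MeasurableEquiv.piUnique_apply]
        funext i
        exact congrFun (congrArg p (Subsingleton.elim _ _)) i
      rw [sel, hf]
      exact (measurePreserving_piUnique (fun _ : Fin (2 ^ 0) => μ)).map_eq
    rw [iterateRec]
    simp only [pow_zero, one_pow, inv_one, one_smul]
    rw [Fintype.sum_unique]
    exact (hone _).symm
  | succ t ih =>
    have ih' : iterateRec n μ t
        = ((((2 : ℝ≥0∞) ^ t) ^ n)⁻¹) • ∑ U : Fin n → Fin (2 ^ t), sel μ U := ih
    rw [iterateRec, ih', collision_step μ (Fin (2 ^ t)) ((((2 : ℝ≥0∞) ^ t) ^ n)⁻¹)]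
    have hN : 2 ^ t + 2 ^ t = 2 ^ (t + 1) := by rw [pow_succ, mul_two]
    have hsum : (∑ W : Fin n → Fin (2 ^ t) ⊕ Fin (2 ^ t), sel μ W)
        = ∑ U : Fin n → Fin (2 ^ (t + 1)), sel μ U := by
      rw [sum_sel_reindex μ
        (finSumFinEquiv : Fin (2 ^ t) ⊕ Fin (2 ^ t) ≃ Fin (2 ^ t + 2 ^ t))]
      rw [hN]
    rw [hsum]
    have ha0 : ((2 : ℝ≥0∞) ^ t) ^ n ≠ 0 :=
      pow_ne_zero _ (pow_ne_zero _ two_ne_zero)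
    have hat : ((2 : ℝ≥0∞) ^ t) ^ n ≠ ⊤ :=
      ENNReal.pow_ne_top (ENNReal.pow_ne_top ENNReal.ofNat_ne_top)
    have hc : ((2 : ℝ≥0∞) ^ n)⁻¹ * (((2 : ℝ≥0∞) ^ t) ^ n)⁻¹ * (((2 : ℝ≥0∞) ^ t) ^ n)⁻¹ *
          ((Fintype.card (Fin (2 ^ t)) : ℝ≥0∞)) ^ n
        = (((2 : ℝ≥0∞) ^ (t + 1)) ^ n)⁻¹ := by
      have hcard : ((Fintype.card (Fin (2 ^ t)) : ℝ≥0∞)) = (2 : ℝ≥0∞) ^ t := by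
        rw [Fintype.card_fin]
        push_cast
        rfl
      rw [hcard, mul_assoc, ENNReal.inv_mul_cancel ha0 hat, mul_one, pow_succ, mul_pow,
        ENNReal.mul_inv (Or.inl ha0) (Or.inl hat), mul_comm]
    rw [hc]
    rfl
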